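/- For Re(ξ) < 1 the operator P_ξ f(x) = ∫₀¹ s^{−ξ} f(xs) ds is bounded on C_l([0,∞]) with operator norm exactly 1/(1 − Re ξ); moreover for f ∈ C_l([0,∞]), lim_{x→∞} P_ξ f(x) = f(∞)/(1 − ξ), so P_ξ maps C_l([0,∞]) into itself. -/

import Mathlib

open MeasureTheory Topology Interval

/-- The operator `P_ξ f (x) = ∫₀¹ s^(-ξ) f(xs) ds`. -/
noncomputable def pOp (ξ : ℂ) (f : ℝ → ℂ) (x : ℝ) : ℂ :=
  ∫ s in (0:ℝ)..1, (s : ℂ) ^ (-ξ) * f (x * s)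

namespace POpAux

open Filter Set intervalIntegral

lemma contAt_cpow (ξ : ℂ) {s : ℝ} (hs : 0 < s) :
    ContinuousAt (fun t : ℝ => (t : ℂ) ^ (-ξ)) s :=
  (continuousAt_cpow_const (Complex.ofReal_mem_slitPlane.2 hs)).comp
    Complex.continuous_ofReal.continuousAt

lemma intInt {ξ : ℂ} (hξ : ξ.re < 1) {g : ℝ → ℂ} {a : ℝ} (ha : 0 ≤ a)
    (hg : ContinuousOn g (Set.Icc 0 a)) :
    IntervalIntegrable (fun s => (s : ℂ) ^ (-ξ) * g s) volume 0 a :=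
  (intervalIntegrable_cpow' (by simp only [Complex.neg_re]; linarith)).mul_continuousOn
    (by rwa [Set.uIcc_of_le ha])

lemma normBound {ξ : ℂ} (hξ : ξ.re < 1) {g : ℝ → ℂ} {M a : ℝ} (ha : 0 ≤ a) (hM : 0 ≤ M)
    (hg : ∀ s ∈ Set.Ioc (0:ℝ) a, ‖g s‖ ≤ M) :
    ‖∫ s in (0:ℝ)..a, (s : ℂ) ^ (-ξ) * g s‖ ≤ M * a ^ (1 - ξ.re) / (1 - ξ.re) := by
  have h1 : (-1:ℝ) < -ξ.re := by linarith
  have hb : IntervalIntegrable (fun s : ℝ => M * s ^ (-ξ.re)) volume 0 a :=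
    (intervalIntegrable_rpow' h1).const_mul M
  have key := intervalIntegral.norm_integral_le_of_norm_le (μ := volume)
      (f := fun s => (s : ℂ) ^ (-ξ) * g s) (g := fun s : ℝ => M * s ^ (-ξ.re)) ha ?_ hb
  · have hval : (∫ s in (0:ℝ)..a, M * s ^ (-ξ.re)) = M * a ^ (1 - ξ.re) / (1 - ξ.re) := by
      rw [intervalIntegral.integral_const_mul, integral_rpow (Or.inl h1),
        Real.zero_rpow (by intro h; linarith : -ξ.re + 1 ≠ 0),
        show -ξ.re + 1 = 1 - ξ.re by ring]
      ring
    rw [hval] at key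
    exact key
  · refine Filter.Eventually.of_forall fun s hs => ?_
    rw [norm_mul, Complex.norm_cpow_eq_rpow_re_of_pos hs.1, Complex.neg_re]
    calc s ^ (-ξ.re) * ‖g s‖ ≤ s ^ (-ξ.re) * M :=
          mul_le_mul_of_nonneg_left (hg s hs) (Real.rpow_nonneg hs.1.le _)
      _ = M * s ^ (-ξ.re) := mul_comm _ _

lemma int_cpow {ξ : ℂ} (hξ : ξ.re < 1) :
    (∫ s in (0:ℝ)..1, (s : ℂ) ^ (-ξ)) = 1 / (1 - ξ) := by
  rw [integral_cpow (Or.inl (by simp only [Complex.neg_re]; linarith))]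
  have hne : -ξ + 1 ≠ 0 := by
    intro h
    have := congrArg Complex.re h
    simp only [Complex.add_re, Complex.neg_re, Complex.one_re, Complex.zero_re] at this
    linarith
  rw [Complex.ofReal_zero, Complex.zero_cpow hne, Complex.ofReal_one, Complex.one_cpow,
    show -ξ + 1 = 1 - ξ by ring, sub_zero]

lemma bddOf {f : ℝ → ℂ} (hf : ContinuousOn f (Set.Ici 0)) {L : ℂ}
    (hL : Tendsto f atTop (𝓝 L)) : ∃ M, 0 ≤ M ∧ ∀ t, 0 ≤ t → ‖f t‖ ≤ M := by
  have h1 : ∀ᶠ x in atTop, ‖f x‖ < ‖L‖ + 1 := (hL.norm).eventually_lt_const (lt_add_one _)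
  obtain ⟨R, hR⟩ := eventually_atTop.1 h1
  obtain ⟨C, hC⟩ := (isCompact_Icc (a := (0:ℝ)) (b := max R 0)).exists_bound_of_continuousOn
      (hf.mono fun t ht => ht.1)
  refine ⟨max C (‖L‖ + 1), le_max_of_le_right (by positivity), fun t ht => ?_⟩
  rcases le_or_gt t (max R 0) with h | h
  · exact le_max_of_le_left (hC t ⟨ht, h⟩)
  · exact le_max_of_le_right (hR t (le_of_lt (lt_of_le_of_lt (le_max_left R 0) h))).le

lemma measAux (ξ : ℂ) {f : ℝ → ℂ} (hf : ContinuousOn f (Set.Ici 0)) {x : ℝ} (hx : 0 ≤ x) :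
    AEStronglyMeasurable (fun s : ℝ => (s:ℂ) ^ (-ξ) * f (x * s))
      (volume.restrict (Ι (0:ℝ) 1)) := by
  rw [Set.uIoc_of_le zero_le_one]
  refine ContinuousOn.aestronglyMeasurable (fun s hs => ?_) measurableSet_Ioc
  exact ((contAt_cpow ξ hs.1).continuousWithinAt).mul
    (ContinuousWithinAt.comp (hf (x*s) (mul_nonneg hx hs.1.le))
      (continuous_const.mul continuous_id).continuousWithinAt
      (fun t ht => mul_nonneg hx ht.1.le))

end POpAux

open POpAux Filter Set intervalIntegral

/-- For `Re ξ < 1`, `P_ξ` maps `C_l([0,∞])` into itself, with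
`lim_{x→∞} P_ξ f (x) = f(∞)/(1-ξ)`, it is bounded with `‖P_ξ f‖_∞ ≤ ‖f‖_∞/(1 - Re ξ)`,
and its operator norm (the least upper bound of `‖P_ξ f‖_∞` over the unit ball) is exactly `1/(1 - Re ξ)`. -/
theorem pOp_norm (ξ : ℂ) (hξ : ξ.re < 1) :
    (∀ f : ℝ → ℂ, ContinuousOn f (Set.Ici 0) →
      ∀ L : ℂ, Filter.Tendsto f Filter.atTop (nhds L) →
        ContinuousOn (pOp ξ f) (Set.Ici 0) ∧
        Filter.Tendsto (pOp ξ f) Filter.atTop (nhds (L / (1 - ξ))) ∧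
        ∀ x ∈ Set.Ici (0:ℝ), ‖pOp ξ f x‖ ≤ (1 - ξ.re)⁻¹ * ⨆ y : Set.Ici (0:ℝ), ‖f y‖) ∧
    IsLUB {r : ℝ | ∃ f : ℝ → ℂ, ContinuousOn f (Set.Ici 0) ∧
      (∃ L : ℂ, Filter.Tendsto f Filter.atTop (nhds L)) ∧
      (∀ y ∈ Set.Ici (0:ℝ), ‖f y‖ ≤ 1) ∧
      r = ⨆ y : Set.Ici (0:ℝ), ‖pOp ξ f y‖} ((1 - ξ.re)⁻¹) := by
  have hσ : (0:ℝ) < 1 - ξ.re := by linarith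
  haveI : Nonempty (Set.Ici (0:ℝ)) := ⟨⟨0, Set.mem_Ici.2 le_rfl⟩⟩
  constructor
  · intro f hf L hL
    obtain ⟨M, hM0, hM⟩ := bddOf hf hL
    have hBdd : BddAbove (Set.range fun y : Set.Ici (0:ℝ) => ‖f y‖) :=
      ⟨M, by rintro r ⟨y, rfl⟩; exact hM y y.2⟩
    set Ms := ⨆ y : Set.Ici (0:ℝ), ‖f y‖ with hMs
    have hMsle : ∀ t, 0 ≤ t → ‖f t‖ ≤ Ms := fun t ht => le_ciSup hBdd ⟨t, ht⟩
    have hMs0 : 0 ≤ Ms := (norm_nonneg _).trans (hMsle 0 le_rfl)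
    have hbnd : ∀ x : ℝ, 0 ≤ x → ∀ᵐ s ∂volume, s ∈ Ι (0:ℝ) 1 →
        ‖(s:ℂ) ^ (-ξ) * f (x * s)‖ ≤ Ms * s ^ (-ξ.re) := by
      intro x hx
      refine Filter.Eventually.of_forall fun s hs => ?_
      rw [Set.uIoc_of_le zero_le_one] at hs
      rw [norm_mul, Complex.norm_cpow_eq_rpow_re_of_pos hs.1, Complex.neg_re]
      calc s ^ (-ξ.re) * ‖f (x * s)‖ ≤ s ^ (-ξ.re) * Ms :=
            mul_le_mul_of_nonneg_left (hMsle _ (mul_nonneg hx hs.1.le))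
              (Real.rpow_nonneg hs.1.le _)
        _ = Ms * s ^ (-ξ.re) := mul_comm _ _
    refine ⟨?_, ?_, ?_⟩
    · intro x₀ hx₀
      have : ContinuousWithinAt (fun x => ∫ s in (0:ℝ)..1, (s:ℂ) ^ (-ξ) * f (x * s))
          (Set.Ici 0) x₀ := by
        apply intervalIntegral.continuousWithinAt_of_dominated_interval
            (bound := fun s => Ms * s ^ (-ξ.re))
        · exact eventually_mem_nhdsWithin.mono fun x hx => measAux ξ hf hx
        · exact eventually_mem_nhdsWithin.mono fun x hx => hbnd x hx
        · exact (intervalIntegrable_rpow' (by linarith)).const_mul Ms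
        · refine Filter.Eventually.of_forall fun s hs => ?_
          rw [Set.uIoc_of_le zero_le_one] at hs
          exact continuousWithinAt_const.mul
            (ContinuousWithinAt.comp (hf (x₀ * s) (mul_nonneg hx₀ hs.1.le))
              (continuous_mul_right s).continuousWithinAt
              (fun x hx => mul_nonneg hx hs.1.le))
      exact this
    · have key : Tendsto (fun x => ∫ s in (0:ℝ)..1, (s:ℂ) ^ (-ξ) * f (x * s)) atTop
          (𝓝 (∫ s in (0:ℝ)..1, (s:ℂ) ^ (-ξ) * L)) := by
        apply intervalIntegral.tendsto_integral_filter_of_dominated_convergence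
            (bound := fun s => Ms * s ^ (-ξ.re))
        · exact (eventually_ge_atTop (0:ℝ)).mono fun x hx => measAux ξ hf hx
        · exact (eventually_ge_atTop (0:ℝ)).mono fun x hx => hbnd x hx
        · exact (intervalIntegrable_rpow' (by linarith)).const_mul Ms
        · refine Filter.Eventually.of_forall fun s hs => ?_
          rw [Set.uIoc_of_le zero_le_one] at hs
          exact (hL.comp (Filter.tendsto_id.atTop_mul_const hs.1)).const_mul _
      have heq : (∫ s in (0:ℝ)..1, (s:ℂ) ^ (-ξ) * L) = L / (1 - ξ) := by
        rw [intervalIntegral.integral_mul_const, int_cpow hξ, div_mul_eq_mul_div, one_mul]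
      rw [heq] at key
      exact key
    · intro x hx
      have h := normBound hξ (g := fun s => f (x * s)) zero_le_one hMs0
          (fun s hs => hMsle _ (mul_nonneg hx hs.1.le))
      have he : Ms * (1:ℝ) ^ (1 - ξ.re) / (1 - ξ.re) = (1 - ξ.re)⁻¹ * Ms := by
        rw [Real.one_rpow]; field_simp
      exact le_of_le_of_eq h he
  · constructor
    · rintro r ⟨f, hfc, ⟨L, hL⟩, hle, rfl⟩
      refine ciSup_le fun y => ?_
      have h := normBound hξ (g := fun s => f ((y:ℝ) * s)) zero_le_one zero_le_one
          (fun s hs => hle _ (mul_nonneg y.2 hs.1.le))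
      have he : (1:ℝ) * (1:ℝ) ^ (1 - ξ.re) / (1 - ξ.re) = (1 - ξ.re)⁻¹ := by
        rw [Real.one_rpow]; field_simp
      exact le_of_le_of_eq h he
    · intro b hb
      have key : ∀ a : ℝ, a ∈ Set.Ioo (0:ℝ) 1 → (1 - 2 * a ^ (1 - ξ.re)) / (1 - ξ.re) ≤ b := by
        intro a ha
        set τ : ℂ := (ξ.im : ℂ) * Complex.I with hτ
        set c : ℝ → ℝ := fun t => min (max t a) 1 with hc
        set fa : ℝ → ℂ := fun t => (c t : ℂ) ^ τ with hfa
        have hac : ∀ t, a ≤ c t := fun t => le_min (le_max_right t a) ha.2.le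
        have hcpos : ∀ t, 0 < c t := fun t => lt_of_lt_of_le ha.1 (hac t)
        have hCc : Continuous c := (continuous_id.max continuous_const).min continuous_const
        have hfaC : Continuous fa :=
          (Complex.continuous_ofReal.comp hCc).cpow continuous_const
            (fun t => Complex.ofReal_mem_slitPlane.2 (hcpos t))
        have hτre : τ.re = 0 := by simp [hτ]
        have hfanorm : ∀ t, ‖fa t‖ = 1 := by
          intro t
          rw [hfa]
          simp only []
          rw [Complex.norm_cpow_eq_rpow_re_of_pos (hcpos t), hτre,
            Real.rpow_zero]
        have hfalim : Tendsto fa atTop (𝓝 1) := by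
          have hev : ∀ᶠ t in atTop, fa t = 1 := by
            refine (eventually_ge_atTop (1:ℝ)).mono fun t ht => ?_
            have hct : c t = 1 := min_eq_right (le_trans ht (le_max_left t a))
            rw [hfa]
            simp only []
            rw [hct, Complex.ofReal_one, Complex.one_cpow]
          have hev' : fa =ᶠ[atTop] (fun _ => (1:ℂ)) := hev
          exact tendsto_const_nhds.congr' hev'.symm
        have hBdd2 : BddAbove (Set.range fun y : Set.Ici (0:ℝ) => ‖pOp ξ fa y‖) := by
          refine ⟨1 * (1:ℝ) ^ (1 - ξ.re) / (1 - ξ.re), ?_⟩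
          rintro r ⟨y, rfl⟩
          exact normBound hξ zero_le_one zero_le_one (fun s _ => (hfanorm _).le)
        have hmemS : (⨆ y : Set.Ici (0:ℝ), ‖pOp ξ fa y‖) ∈ {r : ℝ | ∃ f : ℝ → ℂ,
            ContinuousOn f (Set.Ici 0) ∧
            (∃ L : ℂ, Filter.Tendsto f Filter.atTop (nhds L)) ∧
            (∀ y ∈ Set.Ici (0:ℝ), ‖f y‖ ≤ 1) ∧
            r = ⨆ y : Set.Ici (0:ℝ), ‖pOp ξ f y‖} :=
          ⟨fa, hfaC.continuousOn, ⟨1, hfalim⟩, fun y _ => (hfanorm y).le, rfl⟩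
        have h1le : ‖pOp ξ fa 1‖ ≤ ⨆ y : Set.Ici (0:ℝ), ‖pOp ξ fa y‖ :=
          le_ciSup hBdd2 ⟨1, by norm_num⟩
        -- now the estimate on ‖pOp ξ fa 1‖
        have hI1 : IntervalIntegrable (fun s => (s:ℂ) ^ (-ξ) * fa s) volume 0 a :=
          intInt hξ ha.1.le hfaC.continuousOn
        have hI2 : IntervalIntegrable (fun s => (s:ℂ) ^ (-ξ) * fa s) volume a 1 := by
          apply ContinuousOn.intervalIntegrable
          intro s hs
          rw [Set.uIcc_of_le ha.2.le] at hs
          exact ((contAt_cpow ξ (lt_of_lt_of_le ha.1 hs.1)).continuousWithinAt).mul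
            hfaC.continuousWithinAt
        have hsplit : (∫ s in (0:ℝ)..a, (s:ℂ) ^ (-ξ) * fa s)
              + (∫ s in a..(1:ℝ), (s:ℂ) ^ (-ξ) * fa s)
            = ∫ s in (0:ℝ)..1, (s:ℂ) ^ (-ξ) * fa s :=
          intervalIntegral.integral_add_adjacent_intervals hI1 hI2
        have hBeq : (∫ s in a..(1:ℝ), (s:ℂ) ^ (-ξ) * fa s)
            = (((1 - a ^ (1 - ξ.re)) / (1 - ξ.re) : ℝ) : ℂ) := by
          have h1 : Set.EqOn (fun s : ℝ => (s:ℂ) ^ (-ξ) * fa s)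
              (fun s : ℝ => ((s ^ (-ξ.re) : ℝ) : ℂ)) (Set.uIcc a 1) := by
            intro s hs
            rw [Set.uIcc_of_le ha.2.le] at hs
            have hs0 : (0:ℝ) < s := lt_of_lt_of_le ha.1 hs.1
            have hcs : c s = s := by
              rw [hc]; simp only []; rw [max_eq_left hs.1, min_eq_left hs.2]
            simp only [hfa]
            rw [hcs, ← Complex.cpow_add _ _ (Complex.ofReal_ne_zero.2 hs0.ne'),
              show -ξ + τ = ((-ξ.re : ℝ) : ℂ) by
                rw [hτ]; apply Complex.ext <;> simp,
              ← Complex.ofReal_cpow hs0.le]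
          rw [intervalIntegral.integral_congr h1, intervalIntegral.integral_ofReal,
            integral_rpow (Or.inl (by linarith))]
          rw [show -ξ.re + 1 = 1 - ξ.re by ring, Real.one_rpow]
        have hrle1 : a ^ (1 - ξ.re) ≤ 1 := Real.rpow_le_one ha.1.le ha.2.le hσ.le
        have hnormB : ‖∫ s in a..(1:ℝ), (s:ℂ) ^ (-ξ) * fa s‖
            = (1 - a ^ (1 - ξ.re)) / (1 - ξ.re) := by
          rw [hBeq, Complex.norm_real, Real.norm_eq_abs,
            abs_of_nonneg (div_nonneg (by linarith) hσ.le)]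
        have hnormA : ‖∫ s in (0:ℝ)..a, (s:ℂ) ^ (-ξ) * fa s‖
            ≤ 1 * a ^ (1 - ξ.re) / (1 - ξ.re) :=
          normBound hξ ha.1.le zero_le_one (fun s _ => (hfanorm s).le)
        have hP1 : pOp ξ fa 1 = ∫ s in (0:ℝ)..1, (s:ℂ) ^ (-ξ) * fa s := by
          simp only [pOp, one_mul]
        have htri : ‖∫ s in a..(1:ℝ), (s:ℂ) ^ (-ξ) * fa s‖
            ≤ ‖pOp ξ fa 1‖ + ‖∫ s in (0:ℝ)..a, (s:ℂ) ^ (-ξ) * fa s‖ := by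
          rw [hP1, ← hsplit]
          calc ‖∫ s in a..(1:ℝ), (s:ℂ) ^ (-ξ) * fa s‖
              = ‖((∫ s in (0:ℝ)..a, (s:ℂ) ^ (-ξ) * fa s)
                  + (∫ s in a..(1:ℝ), (s:ℂ) ^ (-ξ) * fa s))
                - (∫ s in (0:ℝ)..a, (s:ℂ) ^ (-ξ) * fa s)‖ := by
                rw [add_sub_cancel_left]
            _ ≤ _ := norm_sub_le _ _
        have hEst : (1 - 2 * a ^ (1 - ξ.re)) / (1 - ξ.re) ≤ ‖pOp ξ fa 1‖ := by
          have e : (1 - 2 * a ^ (1 - ξ.re)) / (1 - ξ.re)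
              = (1 - a ^ (1 - ξ.re)) / (1 - ξ.re) - 1 * a ^ (1 - ξ.re) / (1 - ξ.re) := by
            ring
          rw [e]
          rw [hnormB] at htri
          linarith
        exact hEst.trans (h1le.trans (hb hmemS))
      have h0 : Tendsto (fun a : ℝ => a ^ (1 - ξ.re)) (𝓝[>] (0:ℝ)) (𝓝 0) := by
        have h := (Real.continuousAt_rpow_const 0 (1 - ξ.re) (Or.inr hσ.le)).tendsto
        rw [Real.zero_rpow hσ.ne'] at h
        exact h.mono_left nhdsWithin_le_nhds
      have hT : Tendsto (fun a : ℝ => (1 - 2 * a ^ (1 - ξ.re)) / (1 - ξ.re)) (𝓝[>] (0:ℝ))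
          (𝓝 ((1 - ξ.re)⁻¹)) := by
        have h := ((h0.const_mul 2).const_sub 1).div_const (1 - ξ.re)
        simpa [one_div] using h
      refine le_of_tendsto hT ?_
      exact Filter.eventually_of_mem (Ioo_mem_nhdsGT zero_lt_one) key
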